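/- Let V_P = {±e_i} ∪ {(±1/2,…,±1/2)} ⊆ ℝⁿ (n ≥ 4) and ‖x‖_P = max_{i≠j}(|x_i|+|x_j|). For any v, v' ∈ V_P, either v+v' = 0, or v+v' ∈ V_P, or ‖v+v'‖_P = 2. -/

import Mathlib

open Set Filter MeasureTheory Pointwise

/-- The lattice `Dₙ = {x ∈ ℤⁿ : ∑ xᵢ even}`. -/
def Dlat (n : ℕ) : Set (Fin n → ℝ) :=
  {x | (∀ i, ∃ m : ℤ, x i = (m : ℝ)) ∧ ∃ k : ℤ, ∑ i, x i = 2 * (k : ℝ)}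

/-- The Voronoï region of `Dₙ`. -/
def VorDn (n : ℕ) : Set (Fin n → ℝ) :=
  {z | ∀ x ∈ Dlat n, ∑ i, (z i) ^ 2 ≤ ∑ i, (z i - x i) ^ 2}

/-- The norm `‖x‖ = max_{i ≠ j} (|xᵢ| + |xⱼ|)` (whose unit ball is the Voronoï
region of `Dₙ`). -/
noncomputable def DnNorm (n : ℕ) (x : Fin n → ℝ) : ℝ :=
  sSup {r : ℝ | ∃ i j, i ≠ j ∧ r = |x i| + |x j|}

/-- The vertex set of the Voronoï region of `Dₙ`: the `2n` vectors `±eᵢ` and the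
`2ⁿ` vectors `(±1/2, …, ±1/2)`. -/
def VPDn (n : ℕ) : Set (Fin n → ℝ) :=
  {v | ∃ i, v = Pi.single i (1 : ℝ) ∨ v = -Pi.single i (1 : ℝ)} ∪
    {v | ∀ i, v i = 1 / 2 ∨ v i = -(1 / 2)}

lemma DnNorm_eq_two' {n : ℕ} {x : Fin n → ℝ} {i j : Fin n} (hij : i ≠ j)
    (h2 : |x i| + |x j| = 2) (hb : ∀ a b : Fin n, a ≠ b → |x a| + |x b| ≤ 2) :
    DnNorm n x = 2 := by
  have hmem : (2 : ℝ) ∈ {r : ℝ | ∃ i j, i ≠ j ∧ r = |x i| + |x j|} := ⟨i, j, hij, h2.symm⟩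
  have hub : ∀ r ∈ {r : ℝ | ∃ i j, i ≠ j ∧ r = |x i| + |x j|}, r ≤ 2 := by
    rintro r ⟨a, b, hab, rfl⟩; exact hb a b hab
  exact le_antisymm (csSup_le ⟨2, hmem⟩ hub) (le_csSup ⟨2, hub⟩ hmem)

lemma type1_spec {n : ℕ} {v : Fin n → ℝ}
    (h : ∃ i, v = Pi.single i (1 : ℝ) ∨ v = -Pi.single i (1 : ℝ)) :
    ∃ i s, (s = (1 : ℝ) ∨ s = -1) ∧ ∀ k, v k = if k = i then s else 0 := by
  obtain ⟨i, h | h⟩ := h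
  · refine ⟨i, 1, Or.inl rfl, fun k => ?_⟩
    rw [h, Pi.single_apply]
  · refine ⟨i, -1, Or.inr rfl, fun k => ?_⟩
    rw [h, Pi.neg_apply, Pi.single_apply]
    split <;> norm_num

lemma exists_ne_fin {n : ℕ} (hn : 4 ≤ n) (i : Fin n) : ∃ j, j ≠ i := by
  have : 1 < Fintype.card (Fin n) := by simp; omega
  exact Fintype.exists_ne_of_one_lt_card this i

/-- The mixed case: `v` of type 1, `v'` of type 2. -/
lemma mixed_case {n : ℕ} (hn : 4 ≤ n) {v v' : Fin n → ℝ}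
    (hv : ∃ i, v = Pi.single i (1 : ℝ) ∨ v = -Pi.single i (1 : ℝ))
    (hv' : ∀ k, v' k = 1 / 2 ∨ v' k = -(1 / 2)) :
    v + v' = 0 ∨ v + v' ∈ VPDn n ∨ DnNorm n (v + v') = 2 := by
  obtain ⟨i, s, hs, hvk⟩ := type1_spec hv
  set x := v + v' with hx
  have hxk : ∀ k, x k = (if k = i then s else 0) + v' k := fun k => by
    simp [hx, hvk k]
  by_cases hopp : s + v' i = s / 2
  · -- opposite signs: result is of type 2
    right; left; right
    intro k
    by_cases hk : k = i
    · subst hk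
      rw [hxk k, if_pos rfl]
      rcases hs with rfl | rfl
      · left; linarith
      · right; linarith
    · rw [hxk k, if_neg hk, zero_add]; exact hv' k
  · -- same signs: |x i| = 3/2
    right; right
    have hvi := hv' i
    have hxi : |x i| = 3 / 2 := by
      rw [hxk i, if_pos rfl]
      rcases hs with rfl | rfl <;> rcases hvi with h | h
      · rw [h]; norm_num
      · exact absurd (by rw [h]; norm_num) hopp
      · exact absurd (by rw [h]; norm_num) hopp
      · rw [h]; norm_num
    have hxo : ∀ k, k ≠ i → |x k| = 1 / 2 := by
      intro k hk
      rw [hxk k, if_neg hk, zero_add]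
      rcases hv' k with h | h <;> rw [h] <;> norm_num
    obtain ⟨j, hj⟩ := exists_ne_fin hn i
    refine DnNorm_eq_two' (Ne.symm hj) (by rw [hxi, hxo j hj]; norm_num) ?_
    intro a b hab
    rcases eq_or_ne a i with rfl | ha
    · have := hxo b (Ne.symm hab); rw [hxi, this]; norm_num
    · have h1 := hxo a ha
      rcases eq_or_ne b i with rfl | hb
      · rw [h1, hxi]; norm_num
      · rw [h1, hxo b hb]; norm_num

theorem sum_of_vertices_trichotomy_Dn (n : ℕ) (hn : 4 ≤ n)
    (v v' : Fin n → ℝ) (hv : v ∈ VPDn n) (hv' : v' ∈ VPDn n) :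
    v + v' = 0 ∨ v + v' ∈ VPDn n ∨ DnNorm n (v + v') = 2 := by
  rcases hv with hv1 | hv2 <;> rcases hv' with hv'1 | hv'2
  · -- both type 1
    obtain ⟨i, s, hs, hvk⟩ := type1_spec hv1
    obtain ⟨j, t, ht, hvk'⟩ := type1_spec hv'1
    set x := v + v' with hx
    have hxk : ∀ k, x k = (if k = i then s else 0) + (if k = j then t else 0) := fun k => by
      simp [hx, hvk k, hvk' k]
    rcases eq_or_ne i j with rfl | hij
    · -- same coordinate
      by_cases hst : s + t = 0
      · left
        funext k
        rw [Pi.zero_apply, hxk k]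
        split <;> [linarith; ring]
      · right; right
        have hst2 : |s + t| = 2 := by
          rcases hs with rfl | rfl <;> rcases ht with rfl | rfl <;> revert hst <;> norm_num
        obtain ⟨j', hj'⟩ := exists_ne_fin hn i
        have hxi : |x i| = 2 := by rw [hxk i]; simp [hst2]
        have hxo : ∀ k, k ≠ i → |x k| = 0 := by
          intro k hk; rw [hxk k, if_neg hk, if_neg hk]; simp
        refine DnNorm_eq_two' (Ne.symm hj') (by rw [hxi, hxo j' hj']; norm_num) ?_
        intro a b hab
        rcases eq_or_ne a i with rfl | ha
        · rw [hxi, hxo b (Ne.symm hab)]; norm_num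
        · rcases eq_or_ne b i with rfl | hb
          · rw [hxo a ha, hxi]; norm_num
          · rw [hxo a ha, hxo b hb]; norm_num
    · -- different coordinates
      right; right
      have hb1 : ∀ k, |x k| ≤ 1 := by
        intro k
        rw [hxk k]
        rcases eq_or_ne k i with rfl | hk1
        · rw [if_pos rfl, if_neg hij]
          rcases hs with rfl | rfl <;> norm_num
        · rw [if_neg hk1]
          rcases eq_or_ne k j with rfl | hk2
          · rw [if_pos rfl]; rcases ht with rfl | rfl <;> norm_num
          · rw [if_neg hk2]; norm_num
      have hxi : |x i| = 1 := by
        rw [hxk i, if_pos rfl, if_neg hij]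
        rcases hs with rfl | rfl <;> norm_num
      have hxj : |x j| = 1 := by
        rw [hxk j, if_neg (Ne.symm hij), if_pos rfl]
        rcases ht with rfl | rfl <;> norm_num
      exact DnNorm_eq_two' hij (by rw [hxi, hxj]; norm_num)
        (fun a b _ => by linarith [hb1 a, hb1 b])
  · exact mixed_case hn hv1 hv'2
  · rw [add_comm]; exact mixed_case hn hv'1 hv2
  · -- both type 2
    set x := v + v' with hx
    have htri : ∀ k, x k = 1 ∨ x k = 0 ∨ x k = -1 := by
      intro k
      have : x k = v k + v' k := rfl
      rcases hv2 k with h | h <;> rcases hv'2 k with h' | h' <;>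
        rw [this, h, h'] <;> norm_num
    have hb1 : ∀ k, |x k| ≤ 1 := by
      intro k; rcases htri k with h | h | h <;> rw [h] <;> norm_num
    have habs : ∀ k, x k ≠ 0 → |x k| = 1 := by
      intro k hk
      rcases htri k with h | h | h
      · rw [h]; norm_num
      · exact absurd h hk
      · rw [h]; norm_num
    by_cases hall : ∀ k, x k = 0
    · left; funext k; exact hall k
    · push_neg at hall
      obtain ⟨i, hi⟩ := hall
      by_cases hone : ∀ k, k ≠ i → x k = 0
      · right; left; left
        refine ⟨i, ?_⟩
        rcases htri i with h | h | h
        · left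
          funext k
          rw [Pi.single_apply]
          rcases eq_or_ne k i with rfl | hk
          · rw [if_pos rfl, h]
          · rw [if_neg hk, hone k hk]
        · exact absurd h hi
        · right
          funext k
          rw [Pi.neg_apply, Pi.single_apply]
          rcases eq_or_ne k i with rfl | hk
          · rw [if_pos rfl, h]
          · rw [if_neg hk, hone k hk]; norm_num
      · push_neg at hone
        obtain ⟨j, hji, hj⟩ := hone
        right; right
        exact DnNorm_eq_two' (Ne.symm hji)
          (by rw [habs i hi, habs j hj]; norm_num)
          (fun a b _ => by linarith [hb1 a, hb1 b])
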